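/- Let d ≥ 1 be an integer, p > 2, α ∈ (0,2), and let s, w ∈ ℝ satisfy s < d/p − d/2 and w ≤ 0. Suppose moreover that w ≥ −d/2 or s ≥ −d + d/p. Then there exists a real family (a_{j,m})_{(j,m) ∈ (ℕ∪{0}) × ℤ^d} with Σ_{j,m} |a_{j,m}|^{2α/(2−α)} < ∞ such that Σ_{j,m} |a_{j,m} · ω_m^j(p,s,w)|^{α} = ∞. -/

import Mathlib

/-- The weighted Besov wavelet weight `ω_m^j(p,s,w) = 2^{j(s - d/p + d/2)} (1 + 2^{-2j}|m|²)^{w/2}`. -/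
noncomputable def besovWeight (d : ℕ) (p s w : ℝ) (j : ℕ) (m : Fin d → ℤ) : ℝ :=
  (2 : ℝ) ^ ((j : ℝ) * (s - (d : ℝ) / p + (d : ℝ) / 2)) *
    (1 + (2 : ℝ) ^ (-(2 * (j : ℝ))) * ∑ i, ((m i : ℝ)) ^ 2) ^ (w / 2)

open Function

private lemma pow_block_eq {a b : ℕ} {u v : ℤ} (hu0 : 0 ≤ u) (hu : u < 2 ^ a)
    (hv0 : 0 ≤ v) (hv : v < 2 ^ b) (h : 2 ^ a + u = 2 ^ b + v) : a = b := by
  rcases lt_trichotomy a b with hab | hab | hab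
  · exfalso
    have h1 : (2:ℤ) ^ (a+1) ≤ 2 ^ b := pow_le_pow_right₀ (by norm_num) hab
    have h2 : (2:ℤ) ^ (a+1) = 2 ^ a + 2 ^ a := by ring
    linarith
  · exact hab
  · exfalso
    have h1 : (2:ℤ) ^ (b+1) ≤ 2 ^ a := pow_le_pow_right₀ (by norm_num) hab
    have h2 : (2:ℤ) ^ (b+1) = 2 ^ b + 2 ^ b := by ring
    linarith

private lemma aux_main (d : ℕ) (hd : 1 ≤ d) (α θ : ℝ) (hα0 : 0 < α) (hα2 : α < 2)
    (hθ : -(d:ℝ)/2 ≤ θ) (ω : ℕ × (Fin d → ℤ) → ℝ) (J : ℕ → ℕ) (C : ℝ) (hC : 0 < C)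
    (hb : ∀ K : ℕ, 1 ≤ K → ∀ m : Fin d → ℤ, (∀ i, (2:ℤ)^K ≤ m i ∧ m i < 2^(K+1)) →
       C * (2:ℝ)^((K:ℝ)*θ) ≤ ω (J K, m)) :
    ∃ a : ℕ × (Fin d → ℤ) → ℝ,
      Summable (fun x => |a x| ^ (2*α/(2-α))) ∧ ¬ Summable (fun x => |a x * ω x| ^ α) := by
  set β : ℝ := 2*α/(2-α) with hβ
  have h2α : 0 < 2 - α := by linarith
  have hβ0 : 0 < β := by positivity
  -- the index type and injection
  set ι : (Σ k : ℕ, (Fin d → Fin (2^(k+1)))) → ℕ × (Fin d → ℤ) :=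
    fun x => (J (x.1+1), fun i => 2^(x.1+1) + (x.2 i : ℤ)) with hι
  have i0 : Fin d := ⟨0, hd⟩
  have hinj : Function.Injective ι := by
    rintro ⟨k, v⟩ ⟨k', v'⟩ h
    simp only [hι, Prod.mk.injEq] at h
    have h0 := congrFun h.2 i0
    have hk : k + 1 = k' + 1 := by
      refine pow_block_eq (by positivity) ?_ (by positivity) ?_ h0
      · exact_mod_cast Int.ofNat_lt.mpr (v i0).isLt
      · exact_mod_cast Int.ofNat_lt.mpr (v' i0).isLt
    have hk' : k = k' := by omega
    subst hk'
    have hv : v = v' := by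
      funext i
      have hi := congrFun h.2 i
      simp only [add_right_inj] at hi
      exact Fin.ext (by exact_mod_cast hi)
    exact congrArg (Sigma.mk k) hv
  -- the coefficients
  set c : ℕ → ℝ := fun k => (2:ℝ)^(-(k:ℝ)*(θ + d/α)) * (k:ℝ)^(-(1/α)) with hc
  have hcpos : ∀ k : ℕ, 1 ≤ k → 0 < c k := by
    intro k hk
    have : (0:ℝ) < (k:ℝ) := by exact_mod_cast hk
    positivity
  refine ⟨Function.extend ι (fun y => c (y.1+1)) 0, ?_, ?_⟩
  · -- summability of |a|^β
    have heq : (fun x => |Function.extend ι (fun y => c (y.1+1)) 0 x| ^ β)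
        = Function.extend ι (fun y => |c (y.1+1)| ^ β) 0 := by
      funext x
      by_cases h : ∃ y, ι y = x
      · obtain ⟨y, rfl⟩ := h
        rw [hinj.extend_apply, hinj.extend_apply]
      · rw [extend_apply' _ _ _ h, extend_apply' _ _ _ h]
        simp [Real.zero_rpow hβ0.ne']
    rw [heq, summable_extend_zero hinj]
    rw [summable_sigma_of_nonneg (fun y => by positivity)]
    refine ⟨fun k => Summable.of_finite, ?_⟩
    have hval : ∀ k : ℕ, (∑' v : Fin d → Fin (2^(k+1)), |c (k+1)| ^ β)
        = ((2:ℝ)^(((k:ℝ)+1)*d)) * |c (k+1)| ^ β := by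
      intro k
      rw [tsum_fintype, Finset.sum_const, Finset.card_univ]
      congr 1
      rw [Fintype.card_fun, Fintype.card_fin, Fintype.card_fin]
      rw [nsmul_eq_mul]
      congr 1
      push_cast
      rw [← pow_mul, ← Real.rpow_natCast 2 ((k+1)*d)]
      push_cast
      ring_nf
    -- comparison with a convergent p-series
    have hba : β / α = 2 / (2 - α) := by
      rw [hβ]; field_simp
    have hba1 : 1 < β / α := by
      rw [hba, lt_div_iff₀ h2α]; linarith
    have hmaj : Summable (fun k : ℕ => ((k:ℝ)+1) ^ (-(β/α))) := by
      have h1 : Summable (fun n : ℕ => (n:ℝ) ^ (-(β/α))) :=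
        Real.summable_nat_rpow.mpr (by linarith)
      have h2 := (summable_nat_add_iff 1).mpr h1
      refine h2.congr fun n => ?_
      push_cast
      ring_nf
    refine Summable.of_nonneg_of_le (fun k => tsum_nonneg fun v => by positivity) (fun k => ?_) hmaj
    rw [hval k]
    have hK : (0:ℝ) < (k:ℝ) + 1 := by positivity
    have hc1 : c (k+1) = (2:ℝ)^(-((k:ℝ)+1)*(θ + d/α)) * ((k:ℝ)+1)^(-(1/α)) := by
      rw [hc]; push_cast; ring_nf
    rw [abs_of_pos (hcpos (k+1) (Nat.le_add_left 1 k)), hc1,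
      Real.mul_rpow (by positivity) (by positivity),
      ← Real.rpow_mul (by norm_num : (0:ℝ) ≤ 2), ← Real.rpow_mul hK.le,
      ← mul_assoc, ← Real.rpow_add two_pos]
    have hexp : -(1/α)*β = -(β/α) := by ring
    rw [hexp]
    refine mul_le_of_le_one_left (by positivity) ?_
    apply Real.rpow_le_one_of_one_le_of_nonpos one_le_two
    have he : ((k:ℝ)+1)*d + -((k:ℝ)+1)*(θ+d/α)*β = ((k:ℝ)+1) * (-(α*((d:ℝ)+2*θ)/(2-α))) := by
      rw [hβ]; field_simp; ring
    rw [he]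
    have hnonpos : -(α*((d:ℝ)+2*θ)/(2-α)) ≤ 0 :=
      neg_nonpos.mpr (div_nonneg (mul_nonneg hα0.le (by linarith)) h2α.le)
    exact mul_nonpos_of_nonneg_of_nonpos hK.le hnonpos
  · -- divergence
    intro hsum
    set f : (Σ k : ℕ, (Fin d → Fin (2^(k+1)))) → ℝ :=
      (fun x => |Function.extend ι (fun y => c (y.1+1)) 0 x * ω x| ^ α) ∘ ι with hf
    have h2 : Summable f := hsum.comp_injective hinj
    have hnn : ∀ y, 0 ≤ f y := by
      intro y; simp only [hf, Function.comp_apply]; positivity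
    have hT : Summable (fun k : ℕ => ∑' v : Fin d → Fin (2^(k+1)), f ⟨k, v⟩) :=
      ((summable_sigma_of_nonneg hnn).mp h2).2
    have hlow : ∀ k : ℕ, C^α * ((k:ℝ)+1)⁻¹ ≤ ∑' v : Fin d → Fin (2^(k+1)), f ⟨k, v⟩ := by
      intro k
      have hKpos : (0:ℝ) < (k:ℝ)+1 := by positivity
      have hcK : 0 < c (k+1) := hcpos (k+1) (Nat.le_add_left 1 k)
      have hc1 : c (k+1) = (2:ℝ)^(-((k:ℝ)+1)*(θ + d/α)) * ((k:ℝ)+1)^(-(1/α)) := by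
        rw [hc]; push_cast; ring_nf
      have hprod : (c (k+1) * (C * (2:ℝ)^(((k:ℝ)+1)*θ)))^α
          = C^α * (2:ℝ)^(-(((k:ℝ)+1)*(d:ℝ))) * (((k:ℝ)+1))⁻¹ := by
        rw [hc1]
        rw [show (2:ℝ)^(-((k:ℝ)+1)*(θ+(d:ℝ)/α)) * ((k:ℝ)+1)^(-(1/α)) * (C * (2:ℝ)^(((k:ℝ)+1)*θ))
            = C * ((2:ℝ)^(-((k:ℝ)+1)*(θ+(d:ℝ)/α)) * (2:ℝ)^(((k:ℝ)+1)*θ)) * ((k:ℝ)+1)^(-(1/α))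
          from by ring]
        rw [← Real.rpow_add two_pos]
        rw [Real.mul_rpow (by positivity) (by positivity),
          Real.mul_rpow (by positivity) (by positivity)]
        rw [← Real.rpow_mul (by norm_num : (0:ℝ) ≤ 2), ← Real.rpow_mul hKpos.le]
        rw [show -(1/α)*α = (-1 : ℝ) from by field_simp, Real.rpow_neg_one]
        congr 2
        congr 1
        field_simp
        ring
      have hpt : ∀ v : Fin d → Fin (2^(k+1)),
          C^α * (2:ℝ)^(-(((k:ℝ)+1)*(d:ℝ))) * (((k:ℝ)+1))⁻¹ ≤ f ⟨k, v⟩ := by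
        intro v
        have hm : ∀ i : Fin d, (2:ℤ)^(k+1) ≤ (2^(k+1) + ((v i : ℕ) : ℤ))
            ∧ (2^(k+1) + ((v i : ℕ) : ℤ)) < 2^(k+1+1) := by
          intro i
          have hv1 : (0:ℤ) ≤ ((v i : ℕ) : ℤ) := by positivity
          have hv2 : ((v i : ℕ) : ℤ) < 2^(k+1) := by exact_mod_cast (v i).isLt
          have h22 : (2:ℤ)^(k+1+1) = 2^(k+1) + 2^(k+1) := by ring
          constructor <;> linarith
        have hω := hb (k+1) (Nat.le_add_left 1 k) _ hm
        push_cast at hω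
        have hfv : f ⟨k, v⟩ = |c (k+1) * ω (ι ⟨k, v⟩)| ^ α := by
          simp only [hf, Function.comp_apply, hinj.extend_apply]
        have hιv : ι ⟨k, v⟩ = (J (k+1), fun i => 2^(k+1) + ((v i : ℕ) : ℤ)) := rfl
        rw [hfv, hιv]
        have h1 : c (k+1) * (C * (2:ℝ)^(((k:ℝ)+1)*θ))
            ≤ c (k+1) * ω (J (k+1), fun i => 2^(k+1) + ((v i : ℕ) : ℤ)) :=
          mul_le_mul_of_nonneg_left hω hcK.le
        have h3 := (h1.trans (le_abs_self _))
        have h4 := Real.rpow_le_rpow (by positivity) h3 hα0.le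
        rw [hprod] at h4
        exact h4
      have hcard : ((Fintype.card (Fin d → Fin (2^(k+1))) : ℕ) : ℝ)
          = (2:ℝ)^(((k:ℝ)+1)*(d:ℝ)) := by
        rw [Fintype.card_fun, Fintype.card_fin, Fintype.card_fin]
        push_cast
        rw [← pow_mul, ← Real.rpow_natCast 2 ((k+1)*d)]
        push_cast
        ring_nf
      calc C^α * ((k:ℝ)+1)⁻¹
          = ((Fintype.card (Fin d → Fin (2^(k+1))) : ℕ) : ℝ)
            * (C^α * (2:ℝ)^(-(((k:ℝ)+1)*(d:ℝ))) * (((k:ℝ)+1))⁻¹) := by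
            rw [hcard]
            rw [show (2:ℝ)^(((k:ℝ)+1)*(d:ℝ)) * (C^α * (2:ℝ)^(-(((k:ℝ)+1)*(d:ℝ))) * (((k:ℝ)+1))⁻¹)
              = ((2:ℝ)^(((k:ℝ)+1)*(d:ℝ)) * (2:ℝ)^(-(((k:ℝ)+1)*(d:ℝ)))) * (C^α * (((k:ℝ)+1))⁻¹)
              from by ring]
            rw [← Real.rpow_add two_pos, add_neg_cancel, Real.rpow_zero, one_mul]
        _ = ∑' _v : Fin d → Fin (2^(k+1)),
            (C^α * (2:ℝ)^(-(((k:ℝ)+1)*(d:ℝ))) * (((k:ℝ)+1))⁻¹) := by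
            rw [tsum_fintype, Finset.sum_const, Finset.card_univ, nsmul_eq_mul]
        _ ≤ ∑' v : Fin d → Fin (2^(k+1)), f ⟨k, v⟩ :=
            Summable.tsum_le_tsum hpt (Summable.of_finite) (Summable.of_finite)
    have hS : Summable (fun k : ℕ => C^α * ((k:ℝ)+1)⁻¹) :=
      Summable.of_nonneg_of_le (fun k => by positivity) hlow hT
    have hCα : (0:ℝ) < C^α := Real.rpow_pos_of_pos hC α
    have hS2 : Summable (fun k : ℕ => ((k:ℝ)+1)⁻¹) := by
      refine ((hS.mul_left (C^α)⁻¹).congr fun k => ?_)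
      field_simp
    have hS3 : Summable (fun n : ℕ => ((↑(n+1) : ℝ))⁻¹) :=
      hS2.congr fun n => by push_cast; ring
    exact Real.not_summable_natCast_inv ((summable_nat_add_iff 1).mp hS3)

/-- For `p > 2`, `α ∈ (0,2)`, and `(s,w) ∈ E_p \ R_p` (i.e. `s < d/p - d/2`, `w ≤ 0`, and
`w ≥ -d/2` or `s ≥ -d + d/p`), there exists a `2α/(2-α)`-summable coefficient family `a`
such that the family `(|a_{j,m} ω_m^j|^α)` is not summable. -/
theorem exists_coeff_not_summable (d : ℕ) (hd : 1 ≤ d) (p α s w : ℝ)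
    (hp : 2 < p) (hα : α ∈ Set.Ioo (0 : ℝ) 2)
    (hs : s < (d : ℝ) / p - (d : ℝ) / 2) (hw : w ≤ 0)
    (hout : -(d : ℝ) / 2 ≤ w ∨ -(d : ℝ) + (d : ℝ) / p ≤ s) :
    ∃ a : ℕ × (Fin d → ℤ) → ℝ,
      Summable (fun x => |a x| ^ (2 * α / (2 - α))) ∧
      ¬ Summable (fun x => |a x * besovWeight d p s w x.1 x.2| ^ α) := by
  obtain ⟨hα0, hα2⟩ := hα
  have hdpos : (0:ℝ) < d := by exact_mod_cast hd
  set C : ℝ := (1 + 4*(d:ℝ)) ^ (w/2) with hCdef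
  have hC : 0 < C := Real.rpow_pos_of_pos (by positivity) _
  have h4 : ∀ K : ℕ, ((4:ℝ)^K) = (2:ℝ)^(((2*K:ℕ)):ℝ) := by
    intro K
    rw [Real.rpow_natCast, pow_mul]
    norm_num
  have hsq : ∀ K : ℕ, ∀ m : Fin d → ℤ, (∀ i, (2:ℤ)^K ≤ m i ∧ m i < 2^(K+1)) →
      (∑ i, ((m i : ℝ))^2) ≤ (d:ℝ) * 4 * ((4:ℝ)^K) := by
    intro K m hm
    have hb : ∀ i, ((m i : ℝ))^2 ≤ 4 * 4^K := by
      intro i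
      obtain ⟨h1, h2⟩ := hm i
      have h1' : (0:ℝ) ≤ (m i : ℝ) := by
        have : (0:ℤ) ≤ m i := le_trans (by positivity) h1
        exact_mod_cast this
      have h2' : (m i : ℝ) ≤ 2 * 2^K := by
        have h2'' : (m i : ℝ) < 2^(K+1) := by exact_mod_cast h2
        rw [pow_succ, mul_comm] at h2''
        linarith
      have h2K : (0:ℝ) ≤ (2:ℝ)^K := by positivity
      calc ((m i:ℝ))^2 ≤ (2*2^K)^2 := by nlinarith
        _ = 4 * 4^K := by rw [mul_pow, ← pow_mul, mul_comm K 2, pow_mul]; norm_num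
    calc ∑ i, ((m i:ℝ))^2 ≤ ∑ _i : Fin d, (4*4^K : ℝ) :=
          Finset.sum_le_sum (fun i _ => hb i)
      _ = d * (4*4^K) := by
          rw [Finset.sum_const, Finset.card_univ, Fintype.card_fin, nsmul_eq_mul]
      _ = d*4*4^K := by ring
  rcases hout with hw2 | hs2
  · -- use θ = w, all blocks at level j = 0
    refine aux_main d hd α w hα0 hα2 (by linarith) (fun x => besovWeight d p s w x.1 x.2)
      (fun _ => 0) C hC ?_
    intro K hK m hm
    show C * (2:ℝ)^((K:ℝ)*w) ≤ besovWeight d p s w 0 m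
    have hb0 : besovWeight d p s w 0 m = (1 + ∑ i, ((m i:ℝ))^2)^(w/2) := by
      simp [besovWeight]
    rw [hb0]
    have h1K : (1:ℝ) ≤ (4:ℝ)^K := one_le_pow₀ (by norm_num)
    have hsqm := hsq K m hm
    have hbase : (1 + ∑ i, ((m i:ℝ))^2) ≤ (1+4*(d:ℝ)) * 4^K := by nlinarith
    have hmono : ((1+4*(d:ℝ)) * 4^K)^(w/2) ≤ (1 + ∑ i, ((m i:ℝ))^2)^(w/2) := by
      have hpos : (0:ℝ) < 1 + ∑ i, ((m i:ℝ))^2 := by positivity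
      exact Real.rpow_le_rpow_of_nonpos hpos hbase (by linarith)
    have key : ((1+4*(d:ℝ)) * 4^K) ^ (w/2) = C * (2:ℝ)^((K:ℝ)*w) := by
      rw [Real.mul_rpow (by positivity) (by positivity)]
      congr 1
      rw [h4 K, ← Real.rpow_mul (by norm_num : (0:ℝ) ≤ 2)]
      congr 1
      push_cast
      ring
    exact le_trans (le_of_eq key.symm) hmono
  · -- use θ = s - d/p + d/2, blocks at level j = K
    have hθ : -(d:ℝ)/2 ≤ s - (d:ℝ)/p + (d:ℝ)/2 := by
      have hppos : (0:ℝ) < p := by linarith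
      linarith
    refine aux_main d hd α (s - (d:ℝ)/p + (d:ℝ)/2) hα0 hα2 hθ
      (fun x => besovWeight d p s w x.1 x.2) id C hC ?_
    intro K hK m hm
    show C * (2:ℝ)^((K:ℝ)*(s - (d:ℝ)/p + (d:ℝ)/2)) ≤ besovWeight d p s w K m
    have hpow : (2:ℝ)^(-(2*(K:ℝ))) * (4:ℝ)^K = 1 := by
      rw [h4 K, ← Real.rpow_add two_pos]
      push_cast
      norm_num
    have hsqm := hsq K m hm
    have h2Kpos : (0:ℝ) < (2:ℝ)^(-(2*(K:ℝ))) := Real.rpow_pos_of_pos two_pos _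
    have hbase : 1 + (2:ℝ)^(-(2*(K:ℝ))) * ∑ i, ((m i:ℝ))^2 ≤ 1 + 4*(d:ℝ) := by
      have h5 : (2:ℝ)^(-(2*(K:ℝ))) * ∑ i, ((m i:ℝ))^2
          ≤ (2:ℝ)^(-(2*(K:ℝ))) * ((d:ℝ) * 4 * 4^K) :=
        mul_le_mul_of_nonneg_left hsqm h2Kpos.le
      have h6 : (2:ℝ)^(-(2*(K:ℝ))) * ((d:ℝ) * 4 * 4^K) = 4*(d:ℝ) := by
        rw [show (2:ℝ)^(-(2*(K:ℝ))) * ((d:ℝ) * 4 * 4^K)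
          = ((2:ℝ)^(-(2*(K:ℝ))) * 4^K) * ((d:ℝ) * 4) from by ring, hpow]
        ring
      linarith
    have hmono : C ≤ (1 + (2:ℝ)^(-(2*(K:ℝ))) * ∑ i, ((m i:ℝ))^2)^(w/2) := by
      have hpos : (0:ℝ) < 1 + (2:ℝ)^(-(2*(K:ℝ))) * ∑ i, ((m i:ℝ))^2 := by positivity
      exact Real.rpow_le_rpow_of_nonpos hpos hbase (by linarith)
    have h2pos : (0:ℝ) < (2:ℝ)^((K:ℝ)*(s - (d:ℝ)/p + (d:ℝ)/2)) := Real.rpow_pos_of_pos two_pos _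
    rw [besovWeight, mul_comm (C)]
    calc (2:ℝ)^((K:ℝ)*(s - (d:ℝ)/p + (d:ℝ)/2)) * C
        ≤ (2:ℝ)^((K:ℝ)*(s - (d:ℝ)/p + (d:ℝ)/2))
          * (1 + (2:ℝ)^(-(2*(K:ℝ))) * ∑ i, ((m i:ℝ))^2)^(w/2) :=
          mul_le_mul_of_nonneg_left hmono h2pos.le
      _ = _ := rfl
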